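/- arXiv:2604.20322 — 4 statements merged into one kernel-verified Lean document; each statement's English description precedes it below -/
import Mathlib

section
/- Let F be the logistic function and let U ⊆ ℝ^{d-1} contain a nonempty open set. Suppose β₁ = (β₁₀, b₁), γ₁ = (γ₁₀, g₁), β₂ = (β₂₀, b₂), γ₂ = (γ₂₀, g₂) with b₁, g₁, b₁+g₁ pairwise distinct, and suppose F(β₁₀ + b₁ᵀw)F(γ₁₀ + g₁ᵀw) = F(β₂₀ + b₂ᵀw)F(γ₂₀ + g₂ᵀw) for all w ∈ U. Then either (β₁, γ₁) = (β₂, γ₂) or (β₁, γ₁) = (γ₂, β₂). -/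
noncomputable def F (μ : ℝ) : ℝ := Real.exp μ / (1 + Real.exp μ)

open Real

noncomputable def expChar {k : ℕ} (L : Fin k → ℝ) : Multiplicative (Fin k → ℝ) →* ℝ where
  toFun w := Real.exp (∑ l, L l * Multiplicative.toAdd w l)
  map_one' := by simp
  map_mul' x y := by
    simp [mul_add, Finset.sum_add_distrib, Real.exp_add]

lemma expChar_injective {k : ℕ} : Function.Injective (expChar (k := k)) := by
  intro L M h
  funext i
  have h2 := congrArg (fun f => f (Multiplicative.ofAdd (Pi.single i (1:ℝ)))) h
  simp only [expChar, MonoidHom.coe_mk, OneHom.coe_mk, toAdd_ofAdd,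
    Pi.single_apply, mul_ite, mul_one, mul_zero, Finset.sum_ite_eq', Finset.mem_univ,
    if_true] at h2
  exact Real.exp_eq_exp.mp h2

noncomputable def Efam {k : ℕ} (L : Fin k → ℝ) : (Fin k → ℝ) → ℝ :=
  fun w => Real.exp (∑ l, L l * w l)

lemma li_Efam {k : ℕ} : LinearIndependent ℝ (Efam (k := k)) := by
  have h := (linearIndependent_monoidHom (Multiplicative (Fin k → ℝ)) ℝ).comp
    expChar expChar_injective
  exact h

lemma analyticAt_Efam {k : ℕ} (L : Fin k → ℝ) (x : Fin k → ℝ) :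
    AnalyticAt ℝ (Efam L) x := by
  have hs : AnalyticAt ℝ (fun w : Fin k → ℝ => ∑ l, L l * w l) x := by
    apply Finset.analyticAt_fun_sum
    intro l _
    exact analyticAt_const.mul ((ContinuousLinearMap.proj (R := ℝ) (φ := fun _ : Fin k => ℝ) l).analyticAt x)
  exact analyticAt_rexp.comp hs

lemma cross {a b c d : ℝ} (h : F a * F b = F c * F d) :
    Real.exp a * Real.exp b + Real.exp a * Real.exp b * Real.exp c
      + Real.exp a * Real.exp b * Real.exp d
    = Real.exp c * Real.exp d + Real.exp a * Real.exp c * Real.exp d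
      + Real.exp b * Real.exp c * Real.exp d := by
  have ha : (0:ℝ) < 1 + Real.exp a := by positivity
  have hb : (0:ℝ) < 1 + Real.exp b := by positivity
  have hc : (0:ℝ) < 1 + Real.exp c := by positivity
  have hd : (0:ℝ) < 1 + Real.exp d := by positivity
  simp only [F] at h
  field_simp at h
  linear_combination h
theorem shared_design_identifiability {k : ℕ}
    (β₁₀ γ₁₀ β₂₀ γ₂₀ : ℝ) (b₁ g₁ b₂ g₂ : Fin k → ℝ)
    (h1 : b₁ ≠ g₁) (h2 : b₁ ≠ b₁ + g₁) (h3 : g₁ ≠ b₁ + g₁)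
    (U V : Set (Fin k → ℝ)) (hV : IsOpen V) (hVne : V.Nonempty) (hVU : V ⊆ U)
    (heq : ∀ w ∈ U,
      F (β₁₀ + ∑ l, b₁ l * w l) * F (γ₁₀ + ∑ l, g₁ l * w l) =
      F (β₂₀ + ∑ l, b₂ l * w l) * F (γ₂₀ + ∑ l, g₂ l * w l)) :
    (β₁₀ = β₂₀ ∧ b₁ = b₂ ∧ γ₁₀ = γ₂₀ ∧ g₁ = g₂) ∨
    (β₁₀ = γ₂₀ ∧ b₁ = g₂ ∧ γ₁₀ = β₂₀ ∧ g₁ = b₂) := by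
  classical
  have hb1 : b₁ ≠ 0 := fun h => h3 (by rw [h, zero_add])
  have hg1 : g₁ ≠ 0 := fun h => h2 (by rw [h, add_zero])
  have hbg : b₁ ≠ g₁ := h1
  have ngb : ¬ (g₁ = b₁) := fun h => hbg h.symm
  set S := b₁ + g₁ with hS
  set T := b₂ + g₂ with hT
  have dd : ∀ (X Y : Fin k → ℝ) (w : Fin k → ℝ),
      ∑ l, (X + Y) l * w l = (∑ l, X l * w l) + ∑ l, Y l * w l := by
    intro X Y w
    simp [add_mul, Finset.sum_add_distrib]
  set Φ : (Fin k → ℝ) → ℝ := fun w =>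
    Real.exp (β₁₀ + γ₁₀) * Efam S w + Real.exp (β₁₀ + γ₁₀ + β₂₀) * Efam (S + b₂) w
      + Real.exp (β₁₀ + γ₁₀ + γ₂₀) * Efam (S + g₂) w
      - Real.exp (β₂₀ + γ₂₀) * Efam T w - Real.exp (β₂₀ + γ₂₀ + β₁₀) * Efam (T + b₁) w
      - Real.exp (β₂₀ + γ₂₀ + γ₁₀) * Efam (T + g₁) w with hΦ
  have hzero : ∀ w ∈ U, Φ w = 0 := by
    intro w hw
    have hx := cross (heq w hw)
    rw [hΦ]
    simp only [Efam, hS, hT, dd]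
    simp only [Real.exp_add] at hx ⊢
    linear_combination hx
  have hana : AnalyticOnNhd ℝ Φ Set.univ := by
    intro x _
    rw [hΦ]
    exact ((((analyticAt_const.mul (analyticAt_Efam _ x)).add
      (analyticAt_const.mul (analyticAt_Efam _ x))).add
      (analyticAt_const.mul (analyticAt_Efam _ x))).sub
      (analyticAt_const.mul (analyticAt_Efam _ x))).sub
      (analyticAt_const.mul (analyticAt_Efam _ x)) |>.sub
      (analyticAt_const.mul (analyticAt_Efam _ x))
  have hall : ∀ w, Φ w = 0 := by
    obtain ⟨z₀, hz₀⟩ := hVne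
    have heqz : Φ =ᶠ[nhds z₀] 0 :=
      Filter.eventuallyEq_of_mem (hV.mem_nhds hz₀) (fun w hw => hzero w (hVU hw))
    have h := hana.eqOn_zero_of_preconnected_of_eventuallyEq_zero
      isPreconnected_univ (Set.mem_univ z₀) heqz
    exact fun w => h (Set.mem_univ w)
  have hμ : (Finsupp.single S (Real.exp (β₁₀ + γ₁₀))
      + Finsupp.single (S + b₂) (Real.exp (β₁₀ + γ₁₀ + β₂₀))
      + Finsupp.single (S + g₂) (Real.exp (β₁₀ + γ₁₀ + γ₂₀))
      - Finsupp.single T (Real.exp (β₂₀ + γ₂₀))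
      - Finsupp.single (T + b₁) (Real.exp (β₂₀ + γ₂₀ + β₁₀))
      - Finsupp.single (T + g₁) (Real.exp (β₂₀ + γ₂₀ + γ₁₀)) : (Fin k → ℝ) →₀ ℝ) = 0 := by
    apply linearIndependent_iff.mp li_Efam
    rw [map_sub, map_sub, map_sub, map_add, map_add, Finsupp.linearCombination_single,
      Finsupp.linearCombination_single, Finsupp.linearCombination_single,
      Finsupp.linearCombination_single, Finsupp.linearCombination_single,
      Finsupp.linearCombination_single]
    funext w
    have h := hall w
    rw [hΦ] at h
    simpa [smul_eq_mul] using h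
  have hk := fun L => DFunLike.congr_fun hμ L
  simp only [Finsupp.add_apply, Finsupp.sub_apply, Finsupp.single_apply, Finsupp.coe_zero,
    Pi.zero_apply] at hk
  by_cases hST : S = T
  · -- main case: matching supports around common S = T
    have nb : ¬ (T = T + b₁) := fun h => hb1 (left_eq_add.mp h)
    have ng : ¬ (T = T + g₁) := fun h => hg1 (left_eq_add.mp h)
    have kT := hk T
    have kTb := hk (T + b₁)
    have kTg := hk (T + g₁)
    simp only [hST, add_right_inj, left_eq_add, add_eq_left] at kT kTb kTg
    simp only [hb1, hg1, hbg, ngb, if_true, if_false, if_neg, if_pos rfl] at kT kTb kTg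
    simp [hb1, hg1, hbg, ngb] at kT kTb kTg
    by_cases hbb : b₂ = b₁
    · have hb2 : ¬ b₂ = g₁ := fun h => hbg (hbb.symm.trans h)
      simp only [hb2, if_false] at kTg
      by_cases hgg : g₂ = g₁
      · have hb20 : ¬ b₂ = 0 := fun h => hb1 (hbb.symm.trans h)
        have hg20 : ¬ g₂ = 0 := fun h => hg1 (hgg.symm.trans h)
        have hgb2 : ¬ g₂ = b₁ := fun h => ngb (hgg.symm.trans h)
        simp only [hb20, hg20, hbb, hgg, hgb2, if_true, if_false] at kT kTb kTg
        simp [hb20, hg20, hbb, hgg, hgb2, hb1, hg1, hbg, ngb] at kT kTb kTg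
        have e1 : β₁₀ + γ₁₀ = β₂₀ + γ₂₀ := Real.exp_eq_exp.mp (by linarith)
        have e2 : β₁₀ + γ₁₀ + β₂₀ = β₂₀ + γ₂₀ + β₁₀ := Real.exp_eq_exp.mp (by linarith)
        exact Or.inl ⟨by linarith, hbb.symm, by linarith, hgg.symm⟩
      · simp [hgg, Real.exp_ne_zero] at kTg
    · simp only [hbb, if_false] at kTb
      by_cases hgb2 : g₂ = b₁
      · have hgg : ¬ g₂ = g₁ := fun h => hbg (hgb2.symm.trans h)
        simp only [hgg, if_false] at kTg
        by_cases hbg2 : b₂ = g₁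
        · have hb20 : ¬ b₂ = 0 := fun h => hg1 (hbg2.symm.trans h)
          have hg20 : ¬ g₂ = 0 := fun h => hb1 (hgb2.symm.trans h)
          simp only [hb20, hg20, hgb2, hbg2, if_true, if_false] at kT kTb kTg
          simp [hb20, hg20, hgb2, hbg2, hb1, hg1, hbg, ngb] at kT kTb kTg
          have e1 : β₁₀ + γ₁₀ = β₂₀ + γ₂₀ := Real.exp_eq_exp.mp (by linarith)
          have e2 : β₁₀ + γ₁₀ + γ₂₀ = β₂₀ + γ₂₀ + β₁₀ := Real.exp_eq_exp.mp (by linarith)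
          have e3 : β₁₀ + γ₁₀ + β₂₀ = β₂₀ + γ₂₀ + γ₁₀ := Real.exp_eq_exp.mp (by linarith)
          exact Or.inr ⟨by linarith, hgb2.symm, by linarith, hbg2.symm⟩
        · simp [hbg2, Real.exp_ne_zero] at kTg
      · simp [hgb2, Real.exp_ne_zero] at kTb
  · -- S ≠ T : derive a contradiction
    exfalso
    have hTS : ¬ (T = S) := fun h => hST h.symm
    have kT := hk T
    have kS := hk S
    simp only [hST, hTS, add_eq_left, left_eq_add, if_false, if_pos rfl] at kT kS
    simp [hST, hTS, hb1, hg1] at kT kS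
    have hOr : T + b₁ = S ∨ T + g₁ = S := by
      by_contra hcon
      push_neg at hcon
      simp only [hcon.1, hcon.2, if_false] at kS
      simp [hcon.1, hcon.2] at kS
      split_ifs at kS <;>
        nlinarith [Real.exp_pos (β₁₀ + γ₁₀), Real.exp_pos (β₁₀ + γ₁₀ + β₂₀),
          Real.exp_pos (β₁₀ + γ₁₀ + γ₂₀)]
    have hOr2 : S + b₂ = T ∨ S + g₂ = T := by
      by_contra hcon
      push_neg at hcon
      simp [hcon.1, hcon.2, Real.exp_ne_zero] at kT
    rcases hOr with hA | hA
    · -- S = T + b₁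
      have kTg := hk (T + g₁)
      have n1 : ¬ (S = T + g₁) := fun h => hbg (add_left_cancel (hA.trans h))
      simp only [n1, left_eq_add, add_right_inj, hg1, hbg, if_false, if_pos rfl] at kTg
      simp [n1, hg1, hbg] at kTg
      rcases hOr2 with h2 | h2
      · have n2 : ¬ (S + b₂ = T + g₁) := fun h => hg1 (left_eq_add.mp (h2.symm.trans h))
        simp only [n2, if_false] at kTg
        by_cases h3c : S + g₂ = T + g₁
        · apply hb1
          funext l
          have e1 := congrFun hA l
          have e2 := congrFun h2 l
          have e3 := congrFun h3c l
          simp only [hS, hT, Pi.add_apply, Pi.zero_apply] at e1 e2 e3 ⊢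
          linarith
        · simp [h3c, Real.exp_ne_zero] at kTg
      · have n2 : ¬ (S + g₂ = T + g₁) := fun h => hg1 (left_eq_add.mp (h2.symm.trans h))
        simp only [n2, if_false] at kTg
        by_cases h3c : S + b₂ = T + g₁
        · apply hb1
          funext l
          have e1 := congrFun hA l
          have e2 := congrFun h2 l
          have e3 := congrFun h3c l
          simp only [hS, hT, Pi.add_apply, Pi.zero_apply] at e1 e2 e3 ⊢
          linarith
        · simp [h3c, Real.exp_ne_zero] at kTg
    · -- S = T + g₁
      have kTb := hk (T + b₁)
      have n1 : ¬ (S = T + b₁) := fun h => ngb (add_left_cancel (hA.trans h))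
      simp only [n1, left_eq_add, add_right_inj, hb1, ngb, if_false, if_pos rfl] at kTb
      simp [n1, hb1, ngb] at kTb
      rcases hOr2 with h2 | h2
      · have n2 : ¬ (S + b₂ = T + b₁) := fun h => hb1 (left_eq_add.mp (h2.symm.trans h))
        simp only [n2, if_false] at kTb
        by_cases h3c : S + g₂ = T + b₁
        · apply hg1
          funext l
          have e1 := congrFun hA l
          have e2 := congrFun h2 l
          have e3 := congrFun h3c l
          simp only [hS, hT, Pi.add_apply, Pi.zero_apply] at e1 e2 e3 ⊢
          linarith
        · simp [h3c, Real.exp_ne_zero] at kTb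
      · have n2 : ¬ (S + g₂ = T + b₁) := fun h => hb1 (left_eq_add.mp (h2.symm.trans h))
        simp only [n2, if_false] at kTb
        by_cases h3c : S + b₂ = T + b₁
        · apply hg1
          funext l
          have e1 := congrFun hA l
          have e2 := congrFun h2 l
          have e3 := congrFun h3c l
          simp only [hS, hT, Pi.add_apply, Pi.zero_apply] at e1 e2 e3 ⊢
          linarith
        · simp [h3c, Real.exp_ne_zero] at kTb
end

section
/- Let F be the logistic function and let data (yᵢ, xᵢ, zᵢ), i = 1,…,n, with yᵢ ∈ {0,1}, xᵢ ∈ ℝ^d, zᵢ ∈ ℝ^p satisfy double separation: there exist nonzero v ∈ ℝ^d, w ∈ ℝ^p with vᵀxᵢ ≥ 0 and wᵀzᵢ ≥ 0 whenever yᵢ = 1, vᵀxᵢ ≤ 0 and wᵀzᵢ ≤ 0 whenever yᵢ = 0, and at least one observation j with (vᵀxⱼ, wᵀzⱼ) ≠ (0,0). Then for every (β, γ) ∈ ℝ^d × ℝ^p and every t ≥ 0, the derivative in t of L(β + tv, γ + tw) is strictly positive, where L(β,γ) = ∑ᵢ [yᵢ log(F(γᵀzᵢ)F(βᵀxᵢ))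 + (1-yᵢ) log(1 - F(γᵀzᵢ)F(βᵀxᵢ))]. -/
noncomputable def L {n d p : ℕ} (y : Fin n → ℝ) (x : Fin n → Fin d → ℝ)
    (z : Fin n → Fin p → ℝ) (β : Fin d → ℝ) (γ : Fin p → ℝ) : ℝ :=
  ∑ i, (y i * Real.log (F (∑ l, γ l * z i l) * F (∑ l, β l * x i l))
    + (1 - y i) * Real.log (1 - F (∑ l, γ l * z i l) * F (∑ l, β l * x i l)))

lemma one_add_exp_pos (μ : ℝ) : (0:ℝ) < 1 + Real.exp μ := by positivity

lemma F_pos (μ : ℝ) : 0 < F μ := div_pos (Real.exp_pos μ) (one_add_exp_pos μ)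

lemma F_lt_one (μ : ℝ) : F μ < 1 :=
  (div_lt_one (one_add_exp_pos μ)).2 (lt_one_add _)

lemma hasDerivAt_F (μ : ℝ) : HasDerivAt F (F μ * (1 - F μ)) μ := by
  have h := (Real.hasDerivAt_exp μ).div
    ((Real.hasDerivAt_exp μ).const_add 1) (ne_of_gt (one_add_exp_pos μ))
  refine h.congr_deriv ?_
  have hne := ne_of_gt (one_add_exp_pos μ)
  unfold F
  field_simp

/-- The derivative of each summand along the separating direction. -/
noncomputable def Dex (yi a b c e t : ℝ) : ℝ :=
  yi * (e * (1 - F (c + t * e)) + b * (1 - F (a + t * b)))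
    - (1 - yi) * (e * (F (c + t * e) * (1 - F (c + t * e))) * F (a + t * b)
      + F (c + t * e) * (b * (F (a + t * b) * (1 - F (a + t * b)))))
        / (1 - F (c + t * e) * F (a + t * b))

lemma hasDerivAt_term (yi a b c e t : ℝ) :
    HasDerivAt (fun s => yi * Real.log (F (c + s * e) * F (a + s * b))
      + (1 - yi) * Real.log (1 - F (c + s * e) * F (a + s * b)))
      (Dex yi a b c e t) t := by
  unfold Dex
  set U := F (c + t * e) with hUdef
  set V := F (a + t * b) with hVdef
  have hU0 : 0 < U := F_pos _
  have hU1 : U < 1 := F_lt_one _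
  have hV0 : 0 < V := F_pos _
  have hV1 : V < 1 := F_lt_one _
  have hUV1 : U * V < 1 := by nlinarith
  have hinner1 : HasDerivAt (fun s : ℝ => c + s * e) e t := by
    simpa using ((hasDerivAt_id t).mul_const e).const_add c
  have hinner2 : HasDerivAt (fun s : ℝ => a + s * b) b t := by
    simpa using ((hasDerivAt_id t).mul_const b).const_add a
  have hU' : HasDerivAt (fun s => F (c + s * e)) (U * (1 - U) * e) t :=
    HasDerivAt.comp (h₂ := F) t (hasDerivAt_F (c + t * e)) hinner1
  have hV' : HasDerivAt (fun s => F (a + s * b)) (V * (1 - V) * b) t :=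
    HasDerivAt.comp (h₂ := F) t (hasDerivAt_F (a + t * b)) hinner2
  have hprod : HasDerivAt (fun s => F (c + s * e) * F (a + s * b))
      (U * (1 - U) * e * V + U * (V * (1 - V) * b)) t := hU'.mul hV'
  have hlog1 : HasDerivAt (fun s => Real.log (F (c + s * e) * F (a + s * b)))
      ((U * (1 - U) * e * V + U * (V * (1 - V) * b)) / (U * V)) t :=
    hprod.log (by positivity)
  have hsub : HasDerivAt (fun s => 1 - F (c + s * e) * F (a + s * b))
      (-(U * (1 - U) * e * V + U * (V * (1 - V) * b))) t := by
    simpa using (hasDerivAt_const t (1:ℝ)).fun_sub hprod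
  have hlog2 : HasDerivAt (fun s => Real.log (1 - F (c + s * e) * F (a + s * b)))
      (-(U * (1 - U) * e * V + U * (V * (1 - V) * b)) / (1 - U * V)) t :=
    hsub.log (by nlinarith)
  have h := (hlog1.const_mul yi).fun_add (hlog2.const_mul (1 - yi))
  refine h.congr_deriv ?_
  have h1 : (U * (1 - U) * e * V + U * (V * (1 - V) * b)) / (U * V)
      = e * (1 - U) + b * (1 - V) := by
    field_simp
  rw [h1]
  ring

lemma Dex_nonneg (yi a b c e t : ℝ) (hy : yi = 0 ∨ yi = 1)
    (h1 : yi = 1 → 0 ≤ b ∧ 0 ≤ e) (h0 : yi = 0 → b ≤ 0 ∧ e ≤ 0) :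
    0 ≤ Dex yi a b c e t := by
  unfold Dex
  set U := F (c + t * e) with hUdef
  set V := F (a + t * b) with hVdef
  have hU0 : 0 < U := F_pos _
  have hU1 : U < 1 := F_lt_one _
  have hV0 : 0 < V := F_pos _
  have hV1 : V < 1 := F_lt_one _
  have hUV : 0 < 1 - U * V := by nlinarith
  rcases hy with h | h
  · obtain ⟨hb, he⟩ := h0 h
    rw [h]
    have t1 : e * (U * (1 - U)) * V ≤ 0 :=
      mul_nonpos_of_nonpos_of_nonneg
        (mul_nonpos_of_nonpos_of_nonneg he (by nlinarith)) hV0.le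
    have t2 : U * (b * (V * (1 - V))) ≤ 0 :=
      mul_nonpos_of_nonneg_of_nonpos hU0.le
        (mul_nonpos_of_nonpos_of_nonneg hb (by nlinarith))
    have hdiv : (e * (U * (1 - U)) * V + U * (b * (V * (1 - V)))) / (1 - U * V) ≤ 0 :=
      div_nonpos_of_nonpos_of_nonneg (by linarith) hUV.le
    simp only [zero_mul, sub_zero, one_mul, zero_sub]
    exact neg_nonneg.2 hdiv
  · obtain ⟨hb, he⟩ := h1 h
    rw [h]
    simp only [sub_self, zero_mul, zero_div, sub_zero, one_mul]
    nlinarith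

lemma Dex_pos (yi a b c e t : ℝ) (hy : yi = 0 ∨ yi = 1)
    (h1 : yi = 1 → 0 ≤ b ∧ 0 ≤ e) (h0 : yi = 0 → b ≤ 0 ∧ e ≤ 0)
    (hbe : (b, e) ≠ (0, 0)) :
    0 < Dex yi a b c e t := by
  have hbe' : b ≠ 0 ∨ e ≠ 0 := by
    by_contra hc
    push_neg at hc
    exact hbe (by simp [hc.1, hc.2])
  unfold Dex
  set U := F (c + t * e) with hUdef
  set V := F (a + t * b) with hVdef
  have hU0 : 0 < U := F_pos _
  have hU1 : U < 1 := F_lt_one _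
  have hV0 : 0 < V := F_pos _
  have hV1 : V < 1 := F_lt_one _
  have hUV : 0 < 1 - U * V := by nlinarith
  rcases hy with h | h
  · obtain ⟨hb, he⟩ := h0 h
    rw [h]
    have hnum : e * (U * (1 - U)) * V + U * (b * (V * (1 - V))) < 0 := by
      rcases hbe' with hb' | he'
      · have hbneg : b < 0 := lt_of_le_of_ne hb hb'
        have t1 : e * (U * (1 - U)) * V ≤ 0 :=
          mul_nonpos_of_nonpos_of_nonneg
            (mul_nonpos_of_nonpos_of_nonneg he (by nlinarith)) hV0.le
        have t2 : U * (b * (V * (1 - V))) < 0 :=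
          mul_neg_of_pos_of_neg hU0
            (mul_neg_of_neg_of_pos hbneg (by nlinarith))
        linarith
      · have heneg : e < 0 := lt_of_le_of_ne he he'
        have t1 : e * (U * (1 - U)) * V < 0 :=
          mul_neg_of_neg_of_pos
            (mul_neg_of_neg_of_pos heneg (by nlinarith)) hV0
        have t2 : U * (b * (V * (1 - V))) ≤ 0 :=
          mul_nonpos_of_nonneg_of_nonpos hU0.le
            (mul_nonpos_of_nonpos_of_nonneg hb (by nlinarith))
        linarith
    have hdiv : (e * (U * (1 - U)) * V + U * (b * (V * (1 - V)))) / (1 - U * V) < 0 :=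
      div_neg_of_neg_of_pos hnum hUV
    simp only [zero_mul, sub_zero, one_mul, zero_sub]
    exact neg_pos.2 hdiv
  · obtain ⟨hb, he⟩ := h1 h
    rw [h]
    simp only [sub_self, zero_mul, zero_div, sub_zero, one_mul]
    rcases hbe' with hb' | he'
    · have : 0 < b := lt_of_le_of_ne hb (Ne.symm hb')
      nlinarith
    · have : 0 < e := lt_of_le_of_ne he (Ne.symm he')
      nlinarith

lemma sum_lin {d : ℕ} (β v xx : Fin d → ℝ) (s : ℝ) :
    ∑ l, (β + s • v) l * xx l = (∑ l, β l * xx l) + s * ∑ l, v l * xx l := by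
  rw [Finset.mul_sum, ← Finset.sum_add_distrib]
  refine Finset.sum_congr rfl fun l _ => ?_
  simp [Pi.add_apply, Pi.smul_apply, smul_eq_mul]
  ring

theorem loglik_increases_along_separating_direction {n d p : ℕ}
    (y : Fin n → ℝ) (x : Fin n → Fin d → ℝ) (z : Fin n → Fin p → ℝ)
    (hy : ∀ i, y i = 0 ∨ y i = 1)
    (v : Fin d → ℝ) (w : Fin p → ℝ) (hv : v ≠ 0) (hw : w ≠ 0)
    (hsep1 : ∀ i, y i = 1 → 0 ≤ (∑ l, v l * x i l) ∧ 0 ≤ (∑ l, w l * z i l))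
    (hsep0 : ∀ i, y i = 0 → (∑ l, v l * x i l) ≤ 0 ∧ (∑ l, w l * z i l) ≤ 0)
    (hstrict : ∃ j, ((∑ l, v l * x j l), (∑ l, w l * z j l)) ≠ (0, 0))
    (β : Fin d → ℝ) (γ : Fin p → ℝ) (t : ℝ) (ht : 0 ≤ t) :
    0 < deriv (fun s => L y x z (β + s • v) (γ + s • w)) t := by
  have hfun : (fun s => L y x z (β + s • v) (γ + s • w))
      = fun s => ∑ i, (y i * Real.log
          (F ((∑ l, γ l * z i l) + s * ∑ l, w l * z i l)
            * F ((∑ l, β l * x i l) + s * ∑ l, v l * x i l))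
        + (1 - y i) * Real.log
          (1 - F ((∑ l, γ l * z i l) + s * ∑ l, w l * z i l)
            * F ((∑ l, β l * x i l) + s * ∑ l, v l * x i l))) := by
    funext s
    unfold L
    refine Finset.sum_congr rfl fun i _ => ?_
    rw [sum_lin, sum_lin]
  rw [hfun]
  have hderiv : HasDerivAt (fun s => ∑ i, (y i * Real.log
          (F ((∑ l, γ l * z i l) + s * ∑ l, w l * z i l)
            * F ((∑ l, β l * x i l) + s * ∑ l, v l * x i l))
        + (1 - y i) * Real.log
          (1 - F ((∑ l, γ l * z i l) + s * ∑ l, w l * z i l)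
            * F ((∑ l, β l * x i l) + s * ∑ l, v l * x i l))))
      (∑ i, Dex (y i) (∑ l, β l * x i l) (∑ l, v l * x i l)
        (∑ l, γ l * z i l) (∑ l, w l * z i l) t) t :=
    HasDerivAt.fun_sum fun i _ => hasDerivAt_term (y i) (∑ l, β l * x i l)
      (∑ l, v l * x i l) (∑ l, γ l * z i l) (∑ l, w l * z i l) t
  rw [hderiv.deriv]
  obtain ⟨j, hj⟩ := hstrict
  refine Finset.sum_pos' (fun i _ => ?_) ⟨j, Finset.mem_univ j, ?_⟩
  · exact Dex_nonneg _ _ _ _ _ _ (hy i) (hsep1 i) (hsep0 i)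
  · exact Dex_pos _ _ _ _ _ _ (hy j) (hsep1 j) (hsep0 j) hj
end

section
/- Under double separation of the dataset, the log-likelihood L(β, γ) = ∑ᵢ [yᵢ log(F(γᵀzᵢ)F(βᵀxᵢ)) + (1-yᵢ) log(1 - F(γᵀzᵢ)F(βᵀxᵢ))] of the zero-inflated logistic regression model has no maximizer in ℝ^d × ℝ^p. -/
lemma F_strictMono : StrictMono F := by
  intro a b h
  rw [F, F, div_lt_div_iff₀ (by positivity) (by positivity)]
  have h1 := Real.exp_lt_exp.mpr h
  nlinarith [Real.exp_pos a, Real.exp_pos b]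

lemma prod_lt_one (a b : ℝ) : F b * F a < 1 := by
  nlinarith [F_pos a, F_pos b, F_lt_one a, F_lt_one b]

lemma prod_pos' (a b : ℝ) : 0 < F b * F a := mul_pos (F_pos b) (F_pos a)

lemma term_mono (yi a b A B : ℝ) (hy : yi = 0 ∨ yi = 1)
    (h1 : yi = 1 → 0 ≤ A ∧ 0 ≤ B) (h0 : yi = 0 → A ≤ 0 ∧ B ≤ 0) :
    yi * Real.log (F b * F a) + (1 - yi) * Real.log (1 - F b * F a)
    ≤ yi * Real.log (F (b + B) * F (a + A))
      + (1 - yi) * Real.log (1 - F (b + B) * F (a + A)) := by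
  rcases hy with h | h <;> subst h <;> simp only [zero_mul, one_mul, sub_zero, sub_self,
    zero_add, add_zero]
  · obtain ⟨hA, hB⟩ := h0 rfl
    have ha : F (a + A) ≤ F a := F_strictMono.monotone (by linarith)
    have hb : F (b + B) ≤ F b := F_strictMono.monotone (by linarith)
    apply Real.log_le_log (by nlinarith [prod_lt_one a b])
    nlinarith [F_pos a, F_pos (b + B)]
  · obtain ⟨hA, hB⟩ := h1 rfl
    have ha : F a ≤ F (a + A) := F_strictMono.monotone (by linarith)
    have hb : F b ≤ F (b + B) := F_strictMono.monotone (by linarith)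
    apply Real.log_le_log (prod_pos' a b)
    nlinarith [F_pos a, F_pos (b + B)]

lemma term_strict (yi a b A B : ℝ) (hy : yi = 0 ∨ yi = 1)
    (h1 : yi = 1 → 0 ≤ A ∧ 0 ≤ B) (h0 : yi = 0 → A ≤ 0 ∧ B ≤ 0)
    (hne : (A, B) ≠ (0, 0)) :
    yi * Real.log (F b * F a) + (1 - yi) * Real.log (1 - F b * F a)
    < yi * Real.log (F (b + B) * F (a + A))
      + (1 - yi) * Real.log (1 - F (b + B) * F (a + A)) := by
  have hne' : A ≠ 0 ∨ B ≠ 0 := by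
    by_contra hc
    push_neg at hc
    exact hne (by simp [hc.1, hc.2])
  rcases hy with h | h <;> subst h <;> simp only [zero_mul, one_mul, sub_zero, sub_self,
    zero_add, add_zero]
  · obtain ⟨hA, hB⟩ := h0 rfl
    have ha : F (a + A) ≤ F a := F_strictMono.monotone (by linarith)
    have hb : F (b + B) ≤ F b := F_strictMono.monotone (by linarith)
    have hlt : F (b + B) * F (a + A) < F b * F a := by
      rcases hne' with hA' | hB'
      · have ha' : F (a + A) < F a := F_strictMono (by cases lt_or_eq_of_le hA with
          | inl h => linarith
          | inr h => exact absurd h hA')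
        nlinarith [F_pos a, F_pos (b + B), F_pos b]
      · have hb' : F (b + B) < F b := F_strictMono (by cases lt_or_eq_of_le hB with
          | inl h => linarith
          | inr h => exact absurd h hB')
        nlinarith [F_pos a, F_pos (a + A), F_pos b]
    apply Real.log_lt_log (by nlinarith [prod_lt_one a b])
    linarith
  · obtain ⟨hA, hB⟩ := h1 rfl
    have ha : F a ≤ F (a + A) := F_strictMono.monotone (by linarith)
    have hb : F b ≤ F (b + B) := F_strictMono.monotone (by linarith)
    have hlt : F b * F a < F (b + B) * F (a + A) := by
      rcases hne' with hA' | hB'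
      · have ha' : F a < F (a + A) := F_strictMono (by cases lt_or_eq_of_le hA with
          | inl h => linarith
          | inr h => exact absurd h.symm hA')
        nlinarith [F_pos a, F_pos (b + B), F_pos b]
      · have hb' : F b < F (b + B) := F_strictMono (by cases lt_or_eq_of_le hB with
          | inl h => linarith
          | inr h => exact absurd h.symm hB')
        nlinarith [F_pos a, F_pos (a + A), F_pos b]
    exact Real.log_lt_log (prod_pos' a b) hlt

theorem no_mle_under_double_separation {n d p : ℕ}
    (y : Fin n → ℝ) (x : Fin n → Fin d → ℝ) (z : Fin n → Fin p → ℝ)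
    (hy : ∀ i, y i = 0 ∨ y i = 1)
    (v : Fin d → ℝ) (w : Fin p → ℝ) (hv : v ≠ 0) (hw : w ≠ 0)
    (hsep1 : ∀ i, y i = 1 → 0 ≤ (∑ l, v l * x i l) ∧ 0 ≤ (∑ l, w l * z i l))
    (hsep0 : ∀ i, y i = 0 → (∑ l, v l * x i l) ≤ 0 ∧ (∑ l, w l * z i l) ≤ 0)
    (hstrict : ∃ j, ((∑ l, v l * x j l), (∑ l, w l * z j l)) ≠ (0, 0)) :
    ¬ ∃ (β : Fin d → ℝ) (γ : Fin p → ℝ), ∀ (β' : Fin d → ℝ) (γ' : Fin p → ℝ),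
      L y x z β' γ' ≤ L y x z β γ := by
  rintro ⟨β, γ, hmax⟩
  obtain ⟨j, hj⟩ := hstrict
  have key : L y x z β γ < L y x z (fun l => β l + v l) (fun l => γ l + w l) := by
    unfold L
    have hsum : ∀ i : Fin n, (∑ l, (fun l => β l + v l) l * x i l)
        = (∑ l, β l * x i l) + (∑ l, v l * x i l) := by
      intro i
      rw [← Finset.sum_add_distrib]
      exact Finset.sum_congr rfl fun l _ => by ring
    have hsum' : ∀ i : Fin n, (∑ l, (fun l => γ l + w l) l * z i l)
        = (∑ l, γ l * z i l) + (∑ l, w l * z i l) := by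
      intro i
      rw [← Finset.sum_add_distrib]
      exact Finset.sum_congr rfl fun l _ => by ring
    apply Finset.sum_lt_sum
    · intro i _
      rw [hsum i, hsum' i]
      exact term_mono (y i) _ _ _ _ (hy i) (hsep1 i) (hsep0 i)
    · refine ⟨j, Finset.mem_univ j, ?_⟩
      rw [hsum j, hsum' j]
      exact term_strict (y j) _ _ _ _ (hy j) (hsep1 j) (hsep0 j) hj
  exact absurd (hmax _ _) (not_le.mpr key)
end

section
/- If the dataset satisfies ε–double–non-separation for some ε > 0, then the zero-inflated logistic log-likelihood L(β, γ) attains a global maximum at some point of ℝ^d × ℝ^p. -/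
lemma one_sub_FF_pos (a b : ℝ) : 0 < 1 - F a * F b := by
  have h1 := F_pos a; have h2 := F_pos b
  have h3 := F_lt_one a; have h4 := F_lt_one b
  nlinarith

lemma log_F_le (t : ℝ) : Real.log (F t) ≤ t := by
  rw [F, Real.log_div (Real.exp_ne_zero t) (by positivity), Real.log_exp]
  have h : 0 ≤ Real.log (1 + Real.exp t) :=
    Real.log_nonneg (by nlinarith [Real.exp_pos t])
  linarith

lemma log_F_nonpos (t : ℝ) : Real.log (F t) ≤ 0 :=
  Real.log_nonpos (F_pos t).le (F_lt_one t).le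

lemma one_sub_F_le (t : ℝ) : 1 - F t ≤ Real.exp (-t) := by
  have h := Real.exp_pos t
  have e1 : 1 - F t = 1 / (1 + Real.exp t) := by rw [F]; field_simp; ring
  rw [e1, Real.exp_neg, ← one_div]
  gcongr
  linarith

lemma continuous_F : Continuous F :=
  Real.continuous_exp.div (by continuity) (fun t => by positivity)

/-- each summand of L is nonpositive when y i ∈ {0,1} -/
lemma term_nonpos {n d p : ℕ} (y : Fin n → ℝ) (x : Fin n → Fin d → ℝ)
    (z : Fin n → Fin p → ℝ) (β : Fin d → ℝ) (γ : Fin p → ℝ)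
    (i : Fin n) (hyi : y i = 0 ∨ y i = 1) :
    y i * Real.log (F (∑ l, γ l * z i l) * F (∑ l, β l * x i l))
      + (1 - y i) * Real.log (1 - F (∑ l, γ l * z i l) * F (∑ l, β l * x i l)) ≤ 0 := by
  set A := ∑ l, γ l * z i l
  set B := ∑ l, β l * x i l
  have h1 : Real.log (F A * F B) ≤ 0 :=
    Real.log_nonpos (mul_pos (F_pos A) (F_pos B)).le
      (by nlinarith [F_pos A, F_pos B, F_lt_one A, F_lt_one B])
  have h2 : Real.log (1 - F A * F B) ≤ 0 :=
    Real.log_nonpos (one_sub_FF_pos A B).le (by nlinarith [F_pos A, F_pos B])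
  rcases hyi with h | h <;> rw [h] <;> linarith

/-- coercivity bound -/
lemma L_coercive {n d q : ℕ} (y : Fin n → ℝ) (x : Fin n → Fin d → ℝ)
    (z : Fin n → Fin q → ℝ) (hy : ∀ i, y i = 0 ∨ y i = 1) (ε : ℝ) (hε : 0 < ε)
    (hnonsep : ∀ (v : Fin d → ℝ) (w : Fin q → ℝ),
      (∑ l, (v l) ^ 2) + (∑ l, (w l) ^ 2) = 1 →
      (∃ i, y i = 1 ∧ (∑ l, v l * x i l) + (∑ l, w l * z i l) ≤ -ε) ∨
      (∃ i, y i = 0 ∧ ε ≤ min (∑ l, v l * x i l) (∑ l, w l * z i l)))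
    (β : Fin d → ℝ) (γ : Fin q → ℝ) (R : ℝ) (hR : 0 < R)
    (hsum : (∑ l, (β l) ^ 2) + (∑ l, (γ l) ^ 2) = R ^ 2) :
    L y x z β γ ≤ Real.log 2 - ε * R := by
  have hR' : R ≠ 0 := hR.ne'
  have hunit : (∑ l, (β l / R) ^ 2) + (∑ l, (γ l / R) ^ 2) = 1 := by
    simp only [div_pow, ← Finset.sum_div]
    rw [← add_div, hsum]
    field_simp
  have hvx : ∀ i, (∑ l, (β l / R) * x i l) = (∑ l, β l * x i l) / R := by
    intro i; rw [Finset.sum_div]; congr 1; ext l; ring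
  have hwz : ∀ i, (∑ l, (γ l / R) * z i l) = (∑ l, γ l * z i l) / R := by
    intro i; rw [Finset.sum_div]; congr 1; ext l; ring
  have key : ∃ i, (y i * Real.log (F (∑ l, γ l * z i l) * F (∑ l, β l * x i l))
      + (1 - y i) * Real.log (1 - F (∑ l, γ l * z i l) * F (∑ l, β l * x i l)))
      ≤ Real.log 2 - ε * R := by
    rcases hnonsep _ _ hunit with ⟨i, hyi, hle⟩ | ⟨i, hyi, hle⟩
    · refine ⟨i, ?_⟩
      set A := ∑ l, γ l * z i l
      set B := ∑ l, β l * x i l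
      rw [hvx, hwz] at hle
      have hab : B + A ≤ -(ε * R) := by
        rw [← add_div, div_le_iff₀ hR] at hle
        linarith
      have hlog : Real.log (F A * F B) ≤ Real.log 2 - ε * R := by
        rw [Real.log_mul (F_pos A).ne' (F_pos B).ne']
        have := log_F_le A; have := log_F_le B
        have h2 : (0:ℝ) ≤ Real.log 2 := Real.log_nonneg (by norm_num)
        linarith
      rw [hyi]; linarith
    · refine ⟨i, ?_⟩
      set A := ∑ l, γ l * z i l
      set B := ∑ l, β l * x i l
      rw [hvx, hwz, le_min_iff] at hle
      obtain ⟨hB, hA⟩ := hle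
      rw [le_div_iff₀ hR] at hB
      rw [le_div_iff₀ hR] at hA
      have h1 : 1 - F A * F B ≤ 2 * Real.exp (-(ε * R)) := by
        have e1 : 1 - F A * F B = (1 - F A) + F A * (1 - F B) := by ring
        have e2 : F A * (1 - F B) ≤ 1 - F B := by
          nlinarith [F_pos A, F_lt_one A, F_pos B, F_lt_one B]
        have e3 : 1 - F A ≤ Real.exp (-A) := one_sub_F_le A
        have e4 : 1 - F B ≤ Real.exp (-B) := one_sub_F_le B
        have e5 : Real.exp (-A) ≤ Real.exp (-(ε * R)) := Real.exp_le_exp.2 (by linarith)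
        have e6 : Real.exp (-B) ≤ Real.exp (-(ε * R)) := Real.exp_le_exp.2 (by linarith)
        linarith
      have hlog : Real.log (1 - F A * F B) ≤ Real.log 2 - ε * R := by
        calc Real.log (1 - F A * F B) ≤ Real.log (2 * Real.exp (-(ε * R))) :=
              Real.log_le_log (one_sub_FF_pos A B) h1
          _ = Real.log 2 - ε * R := by
              rw [Real.log_mul (by norm_num) (Real.exp_ne_zero _), Real.log_exp]; ring
      rw [hyi]; linarith
  obtain ⟨i, hi⟩ := key
  have : L y x z β γ ≤ (y i * Real.log (F (∑ l, γ l * z i l) * F (∑ l, β l * x i l))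
      + (1 - y i) * Real.log (1 - F (∑ l, γ l * z i l) * F (∑ l, β l * x i l))) := by
    unfold L
    rw [← Finset.add_sum_erase _ _ (Finset.mem_univ i)]
    have : ∑ j ∈ Finset.univ.erase i,
        (y j * Real.log (F (∑ l, γ l * z j l) * F (∑ l, β l * x j l))
        + (1 - y j) * Real.log (1 - F (∑ l, γ l * z j l) * F (∑ l, β l * x j l))) ≤ 0 :=
      Finset.sum_nonpos (fun j _ => term_nonpos y x z β γ j (hy j))
    linarith
  linarith

set_option maxHeartbeats 1000000 in
theorem mle_exists_under_non_separation {n d q : ℕ}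
    (y : Fin n → ℝ) (x : Fin n → Fin d → ℝ) (z : Fin n → Fin q → ℝ)
    (hy : ∀ i, y i = 0 ∨ y i = 1) (ε : ℝ) (hε : 0 < ε)
    (hnonsep : ∀ (v : Fin d → ℝ) (w : Fin q → ℝ),
      (∑ l, (v l) ^ 2) + (∑ l, (w l) ^ 2) = 1 →
      (∃ i, y i = 1 ∧ (∑ l, v l * x i l) + (∑ l, w l * z i l) ≤ -ε) ∨
      (∃ i, y i = 0 ∧ ε ≤ min (∑ l, v l * x i l) (∑ l, w l * z i l))) :
    ∃ (β : Fin d → ℝ) (γ : Fin q → ℝ), ∀ (β' : Fin d → ℝ) (γ' : Fin q → ℝ),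
      L y x z β' γ' ≤ L y x z β γ := by
  classical
  set c : ℝ := L y x z 0 0 with hc
  set R₀ : ℝ := max 1 ((Real.log 2 - c + 1) / ε) with hR₀
  have hR₀1 : (1:ℝ) ≤ R₀ := le_max_left _ _
  have hR₀pos : (0:ℝ) < R₀ := by linarith
  have hεR₀ : Real.log 2 - ε * R₀ ≤ c - 1 := by
    have h : (Real.log 2 - c + 1) / ε ≤ R₀ := le_max_right _ _
    rw [div_le_iff₀ hε] at h
    nlinarith
  -- the compact set
  set S : Set ((Fin d → ℝ) × (Fin q → ℝ)) :=
    {p | (∑ l, (p.1 l) ^ 2) + (∑ l, (p.2 l) ^ 2) ≤ R₀ ^ 2} with hS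
  have hcont_sq : Continuous fun p : (Fin d → ℝ) × (Fin q → ℝ) =>
      (∑ l, (p.1 l) ^ 2) + (∑ l, (p.2 l) ^ 2) := by
    apply Continuous.add
    · exact continuous_finset_sum _ (fun l _ =>
        ((continuous_apply l).comp continuous_fst).pow 2)
    · exact continuous_finset_sum _ (fun l _ =>
        ((continuous_apply l).comp continuous_snd).pow 2)
  have hclosed : IsClosed S := isClosed_le hcont_sq continuous_const
  have hsub : S ⊆ Metric.closedBall 0 R₀ := by
    intro p hp
    simp only [Metric.mem_closedBall, dist_zero_right]
    rw [Prod.norm_def]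
    have h1 : ‖p.1‖ ≤ R₀ := by
      rw [pi_norm_le_iff_of_nonneg hR₀pos.le]
      intro l
      have hsq : (p.1 l) ^ 2 ≤ R₀ ^ 2 := by
        have h1 : (p.1 l) ^ 2 ≤ ∑ j, (p.1 j) ^ 2 :=
          Finset.single_le_sum (f := fun j => (p.1 j) ^ 2)
            (fun j _ => sq_nonneg _) (Finset.mem_univ l)
        have h2 : (0:ℝ) ≤ ∑ j, (p.2 j) ^ 2 :=
          Finset.sum_nonneg (fun j _ => sq_nonneg _)
        have := hp
        simp only [hS, Set.mem_setOf_eq] at this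
        linarith
      calc ‖p.1 l‖ = |p.1 l| := rfl
        _ ≤ R₀ := abs_le.mpr (abs_le_of_sq_le_sq' hsq hR₀pos.le)
    have h2 : ‖p.2‖ ≤ R₀ := by
      rw [pi_norm_le_iff_of_nonneg hR₀pos.le]
      intro l
      have hsq : (p.2 l) ^ 2 ≤ R₀ ^ 2 := by
        have h1 : (p.2 l) ^ 2 ≤ ∑ j, (p.2 j) ^ 2 :=
          Finset.single_le_sum (f := fun j => (p.2 j) ^ 2)
            (fun j _ => sq_nonneg _) (Finset.mem_univ l)
        have h2 : (0:ℝ) ≤ ∑ j, (p.1 j) ^ 2 :=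
          Finset.sum_nonneg (fun j _ => sq_nonneg _)
        have := hp
        simp only [hS, Set.mem_setOf_eq] at this
        linarith
      calc ‖p.2 l‖ = |p.2 l| := rfl
        _ ≤ R₀ := abs_le.mpr (abs_le_of_sq_le_sq' hsq hR₀pos.le)
    exact max_le h1 h2
  have hScompact : IsCompact S :=
    (isCompact_closedBall (0 : (Fin d → ℝ) × (Fin q → ℝ)) R₀).of_isClosed_subset hclosed hsub
  have h0S : ((0 : Fin d → ℝ), (0 : Fin q → ℝ)) ∈ S := by
    show (∑ l, ((0 : Fin d → ℝ) l) ^ 2) + (∑ l, ((0 : Fin q → ℝ) l) ^ 2) ≤ R₀ ^ 2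
    simp only [Pi.zero_apply]
    simp only [ne_eq, OfNat.ofNat_ne_zero, not_false_eq_true, zero_pow,
      Finset.sum_const_zero, add_zero]
    positivity
  have hLcont : Continuous fun p : (Fin d → ℝ) × (Fin q → ℝ) => L y x z p.1 p.2 := by
    unfold L
    apply continuous_finset_sum
    intro i _
    have hA : Continuous fun p : (Fin d → ℝ) × (Fin q → ℝ) => ∑ l, p.2 l * z i l := by
      apply continuous_finset_sum; intro l _
      exact ((continuous_apply l).comp continuous_snd).mul continuous_const
    have hB : Continuous fun p : (Fin d → ℝ) × (Fin q → ℝ) => ∑ l, p.1 l * x i l := by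
      apply continuous_finset_sum; intro l _
      exact ((continuous_apply l).comp continuous_fst).mul continuous_const
    have hFF : Continuous fun p : (Fin d → ℝ) × (Fin q → ℝ) =>
        F (∑ l, p.2 l * z i l) * F (∑ l, p.1 l * x i l) :=
      (continuous_F.comp hA).mul (continuous_F.comp hB)
    have h1 : Continuous fun p : (Fin d → ℝ) × (Fin q → ℝ) =>
        Real.log (F (∑ l, p.2 l * z i l) * F (∑ l, p.1 l * x i l)) :=
      hFF.log (fun p => (mul_pos (F_pos _) (F_pos _)).ne')
    have h2 : Continuous fun p : (Fin d → ℝ) × (Fin q → ℝ) =>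
        Real.log (1 - F (∑ l, p.2 l * z i l) * F (∑ l, p.1 l * x i l)) :=
      ((continuous_const.sub hFF).log (fun p => (one_sub_FF_pos _ _).ne'))
    exact (continuous_const.mul h1).add (continuous_const.mul h2)
  obtain ⟨m, hmS, hmax⟩ := hScompact.exists_isMaxOn ⟨_, h0S⟩ hLcont.continuousOn
  refine ⟨m.1, m.2, fun β' γ' => ?_⟩
  have hmax' : ∀ p ∈ S, L y x z p.1 p.2 ≤ L y x z m.1 m.2 := fun p hp =>
    isMaxOn_iff.1 hmax p hp
  by_cases hmem : (β', γ') ∈ S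
  · exact hmax' (β', γ') hmem
  · simp only [hS, Set.mem_setOf_eq, not_le] at hmem
    set T : ℝ := (∑ l, (β' l) ^ 2) + (∑ l, (γ' l) ^ 2) with hT
    have hTnn : 0 ≤ T := by
      apply add_nonneg <;> exact Finset.sum_nonneg (fun j _ => sq_nonneg _)
    set R : ℝ := Real.sqrt T with hRdef
    have hRR : T = R ^ 2 := (Real.sq_sqrt hTnn).symm
    have hRgt : R₀ < R := by
      nlinarith [Real.sq_sqrt hTnn, Real.sqrt_nonneg T]
    have hRpos : 0 < R := lt_trans hR₀pos hRgt
    have hcoer := L_coercive y x z hy ε hε hnonsep β' γ' R hRpos hRR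
    have h00 : L y x z ((0 : Fin d → ℝ), (0 : Fin q → ℝ)).1
        ((0 : Fin d → ℝ), (0 : Fin q → ℝ)).2 ≤ L y x z m.1 m.2 := hmax' _ h0S
    have hcLm : c ≤ L y x z m.1 m.2 := by rw [hc]; exact h00
    have : ε * R₀ < ε * R := by exact (mul_lt_mul_iff_right₀ hε).2 hRgt
    linarith
end
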